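/- For all k, l ∈ ℕ, the convolution of Schreier families satisfies S_{l+k} = S_l[S_k] = S_k[S_l], where P[Q] = {⋃_{i=1}^d F_i : F_1 < ... < F_d, each F_i ∈ Q, {min F_i}_{i=1}^d ∈ P}. -/

import Mathlib

/-- The first Schreier family: finite sets `F` with `|F| ≤ min F`. -/
def SchreierOne : Set (Finset ℕ) := {F | ∀ k ∈ F, F.card ≤ k}

/-- The minimum of a finite set of naturals (0 for the empty set). -/
noncomputable def finMin (F : Finset ℕ) : ℕ := sInf {k | k ∈ F}

/-- The convolution `P[Q]` of two families of finite subsets of ℕ: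
unions of successive members of `Q` whose minima form a set in `P`. -/
def conv (P Q : Set (Finset ℕ)) : Set (Finset ℕ) :=
  {U | ∃ (d : ℕ) (F : Fin d → Finset ℕ),
    (∀ i, F i ∈ Q) ∧ (∀ i, (F i).Nonempty) ∧
    (∀ i j : Fin d, i < j → ∀ a ∈ F i, ∀ b ∈ F j, a < b) ∧
    (Finset.univ.image fun i => finMin (F i)) ∈ P ∧
    U = Finset.univ.biUnion F}

/-- The modified convolution `P[Q]_M`: unions of pairwise disjoint members of `Q`
whose minima form a set in `P`. -/
def mconv (P Q : Set (Finset ℕ)) : Set (Finset ℕ) :=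
  {U | ∃ (d : ℕ) (F : Fin d → Finset ℕ),
    (∀ i, F i ∈ Q) ∧ (∀ i, (F i).Nonempty) ∧
    (∀ i j : Fin d, i ≠ j → Disjoint (F i) (F j)) ∧
    (Finset.univ.image fun i => finMin (F i)) ∈ P ∧
    U = Finset.univ.biUnion F}

/-- The Schreier families `S_n` (indexed so that `Schreier 1 = S_1`,
`Schreier (n+1) = S_1[S_n]`). -/
def Schreier : ℕ → Set (Finset ℕ)
  | 0 => {F | F.card ≤ 1}
  | 1 => SchreierOne
  | (n+2) => conv SchreierOne (Schreier (n+1))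

/-- The modified Schreier families `S^M_n`. -/
def SchreierM : ℕ → Set (Finset ℕ)
  | 0 => {F | F.card ≤ 1}
  | 1 => SchreierOne
  | (n+2) => mconv SchreierOne (SchreierM (n+1))

namespace SchreierAux

def Rlt (A B : Finset ℕ) : Prop := ∀ a ∈ A, ∀ b ∈ B, a < b

def unionL (L : List (Finset ℕ)) : Finset ℕ := L.foldr (· ∪ ·) ∅

@[simp] lemma mem_unionL {a : ℕ} {L : List (Finset ℕ)} : a ∈ unionL L ↔ ∃ A ∈ L, a ∈ A := by
  induction L with
  | nil => simp [unionL]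
  | cons B L ih => simp [unionL] at ih ⊢; rw [ih]

lemma finMin_mem {F : Finset ℕ} (h : F.Nonempty) : finMin F ∈ F := by
  have : {k | k ∈ F}.Nonempty := h
  exact Nat.sInf_mem this

lemma finMin_le {F : Finset ℕ} {a : ℕ} (h : a ∈ F) : finMin F ≤ a := Nat.sInf_le h

def convL (P Q : Set (Finset ℕ)) : Set (Finset ℕ) :=
  {U | ∃ L : List (Finset ℕ),
    (∀ A ∈ L, A ∈ Q) ∧ (∀ A ∈ L, A.Nonempty) ∧ L.Pairwise Rlt ∧
    ((L.map finMin).toFinset ∈ P) ∧ U = unionL L}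

lemma conv_eq_convL (P Q : Set (Finset ℕ)) : conv P Q = convL P Q := by
  ext U
  constructor
  · rintro ⟨d, F, hQ, hne, hord, hmin, rfl⟩
    refine ⟨List.ofFn F, ?_, ?_, ?_, ?_, ?_⟩
    · intro A hA; rw [List.mem_ofFn] at hA; obtain ⟨i, rfl⟩ := hA; exact hQ i
    · intro A hA; rw [List.mem_ofFn] at hA; obtain ⟨i, rfl⟩ := hA; exact hne i
    · rw [List.pairwise_ofFn]; intro i j hij; exact hord i j hij
    · convert hmin using 2
      ext a; simp [List.mem_ofFn]
    · ext a; simp [List.mem_ofFn, mem_unionL]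
  · rintro ⟨L, hQ, hne, hord, hmin, rfl⟩
    refine ⟨L.length, L.get, ?_, ?_, ?_, ?_, ?_⟩
    · intro i; exact hQ _ (L.get_mem i)
    · intro i; exact hne _ (L.get_mem i)
    · intro i j hij
      have h2 : List.Pairwise Rlt (List.ofFn L.get) := by rw [List.ofFn_get]; exact hord
      exact List.pairwise_ofFn.1 h2 hij
    · convert hmin using 2
      ext a; simp [List.mem_ofFn]
    · ext a; simp [mem_unionL]
      constructor
      · rintro ⟨A, hA, ha⟩; obtain ⟨i, rfl⟩ := List.mem_iff_get.1 hA; exact ⟨i, ha⟩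
      · rintro ⟨i, ha⟩; exact ⟨L.get i, L.get_mem i, ha⟩

end SchreierAux

namespace SchreierAux

lemma finMin_unionL {L : List (Finset ℕ)} (hne : ∀ A ∈ L, A.Nonempty) (h : L ≠ []) :
    finMin (unionL L) = finMin ((L.map finMin).toFinset) := by
  obtain ⟨A0, hA0⟩ := List.exists_mem_of_ne_nil L h
  have hUne : (unionL L).Nonempty := by
    obtain ⟨a, ha⟩ := hne A0 hA0
    exact ⟨a, mem_unionL.2 ⟨A0, hA0, ha⟩⟩
  have hBne : ((L.map finMin).toFinset).Nonempty :=
    ⟨finMin A0, by simp only [List.mem_toFinset, List.mem_map]; exact ⟨A0, hA0, rfl⟩⟩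
  apply le_antisymm
  · have := finMin_mem hBne
    simp only [List.mem_toFinset, List.mem_map] at this
    obtain ⟨A, hA, hAe⟩ := this
    have : finMin ((L.map finMin).toFinset) ∈ unionL L := by
      rw [← hAe]; exact mem_unionL.2 ⟨A, hA, finMin_mem (hne A hA)⟩
    exact finMin_le this
  · have := finMin_mem hUne
    rw [mem_unionL] at this
    obtain ⟨A, hA, hmem⟩ := this
    calc finMin ((L.map finMin).toFinset) ≤ finMin A := by
          apply finMin_le; simp only [List.mem_toFinset, List.mem_map]; exact ⟨A, hA, rfl⟩
      _ ≤ finMin (unionL L) := finMin_le hmem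

lemma pairwise_sym {L : List (Finset ℕ)} (h : L.Pairwise Rlt) {G G' : Finset ℕ}
    (hG : G ∈ L) (hG' : G' ∈ L) (hlt : finMin G < finMin G') (hGne : G.Nonempty)
    (hG'ne : G'.Nonempty) : Rlt G G' := by
  have hne : G ≠ G' := by rintro rfl; exact lt_irrefl _ hlt
  have hS : List.Pairwise (fun A B => Rlt A B ∨ Rlt B A) L := h.imp Or.inl
  haveI : Std.Symm (fun A B : Finset ℕ => Rlt A B ∨ Rlt B A) := ⟨fun A B h => h.symm⟩
  rcases hS.forall hG hG' hne with h1 | h1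
  · exact h1
  · exact absurd (h1 _ (finMin_mem hG'ne) _ (finMin_mem hGne)) (by omega)

open Classical in
noncomputable def wit (Q R : Set (Finset ℕ)) (H : Finset ℕ) : List (Finset ℕ) :=
  if h : H ∈ convL Q R then h.choose else []

lemma wit_spec {Q R : Set (Finset ℕ)} {H : Finset ℕ} (h : H ∈ convL Q R) :
    (∀ A ∈ wit Q R H, A ∈ R) ∧ (∀ A ∈ wit Q R H, A.Nonempty) ∧ (wit Q R H).Pairwise Rlt ∧
    ((wit Q R H).map finMin).toFinset ∈ Q ∧ H = unionL (wit Q R H) := by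
  rw [wit, dif_pos h]; exact h.choose_spec

lemma subset_of_mem_wit {Q R : Set (Finset ℕ)} {H : Finset ℕ} (h : H ∈ convL Q R)
    {G : Finset ℕ} (hG : G ∈ wit Q R H) : G ⊆ H := fun a ha => by
  rw [(wit_spec h).2.2.2.2]; exact mem_unionL.2 ⟨G, hG, ha⟩

lemma convL_assoc (P Q R : Set (Finset ℕ)) : convL P (convL Q R) = convL (convL P Q) R := by
  ext U
  constructor
  · rintro ⟨Lh, hQ', hne, hord, hmin, rfl⟩
    set g := wit Q R with hg
    have gspec := fun H (hH : H ∈ Lh) => wit_spec (hQ' H hH)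
    simp only [← hg] at gspec
    have gne : ∀ H ∈ Lh, g H ≠ [] := by
      intro H hH hnil
      obtain ⟨a, ha⟩ := hne H hH
      rw [(gspec H hH).2.2.2.2, hnil] at ha
      simp [unionL] at ha
    have hsub : ∀ H ∈ Lh, ∀ G ∈ g H, G ⊆ H := fun H hH G hG => subset_of_mem_wit (hQ' H hH) hG
    refine ⟨(Lh.map g).flatten, ?_, ?_, ?_, ?_, ?_⟩
    · intro G hG
      simp only [List.mem_flatten, List.mem_map] at hG
      obtain ⟨l, ⟨H, hH, rfl⟩, hGl⟩ := hG
      exact (gspec H hH).1 G hGl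
    · intro G hG
      simp only [List.mem_flatten, List.mem_map] at hG
      obtain ⟨l, ⟨H, hH, rfl⟩, hGl⟩ := hG
      exact (gspec H hH).2.1 G hGl
    · rw [List.pairwise_flatten]
      constructor
      · rintro l hl
        simp only [List.mem_map] at hl
        obtain ⟨H, hH, rfl⟩ := hl
        exact (gspec H hH).2.2.1
      · rw [List.pairwise_map]
        refine hord.imp_of_mem ?_
        intro H H' hH hH' hR G hGl G' hG'l a ha b hb
        exact hR a (hsub H hH G hGl ha) b (hsub H' hH' G' hG'l hb)
    · refine ⟨Lh.map (fun H => ((g H).map finMin).toFinset), ?_, ?_, ?_, ?_, ?_⟩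
      · intro A hA
        simp only [List.mem_map] at hA
        obtain ⟨H, hH, rfl⟩ := hA
        exact (gspec H hH).2.2.2.1
      · intro A hA
        simp only [List.mem_map] at hA
        obtain ⟨H, hH, rfl⟩ := hA
        obtain ⟨G, hG⟩ := List.exists_mem_of_ne_nil _ (gne H hH)
        exact ⟨finMin G, by simp only [List.mem_toFinset, List.mem_map]; exact ⟨G, hG, rfl⟩⟩
      · rw [List.pairwise_map]
        refine hord.imp_of_mem ?_
        intro H H' hH hH' hR a ha b hb
        simp only [List.mem_toFinset, List.mem_map] at ha hb
        obtain ⟨G, hG, rfl⟩ := ha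
        obtain ⟨G', hG', rfl⟩ := hb
        exact hR _ (hsub H hH G hG (finMin_mem ((gspec H hH).2.1 G hG)))
          _ (hsub H' hH' G' hG' (finMin_mem ((gspec H' hH').2.1 G' hG')))
      · have : (Lh.map (fun H => ((g H).map finMin).toFinset)).map finMin = Lh.map finMin := by
          rw [List.map_map]
          apply List.map_congr_left
          intro H hH
          show finMin (((g H).map finMin).toFinset) = finMin H
          rw [← finMin_unionL ((gspec H hH).2.1) (gne H hH), ← (gspec H hH).2.2.2.2]
        rw [this]; exact hmin
      · ext a
        constructor
        · intro ha
          rw [List.mem_toFinset, List.mem_map] at ha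
          obtain ⟨G, hG, rfl⟩ := ha
          rw [List.mem_flatten] at hG
          obtain ⟨l, hl, hGl⟩ := hG
          rw [List.mem_map] at hl
          obtain ⟨H, hH, rfl⟩ := hl
          exact mem_unionL.2 ⟨_, List.mem_map.2 ⟨H, hH, rfl⟩,
            List.mem_toFinset.2 (List.mem_map.2 ⟨G, hGl, rfl⟩)⟩
        · intro ha
          rw [mem_unionL] at ha
          obtain ⟨A, hA, haA⟩ := ha
          rw [List.mem_map] at hA
          obtain ⟨H, hH, rfl⟩ := hA
          rw [List.mem_toFinset, List.mem_map] at haA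
          obtain ⟨G, hG, rfl⟩ := haA
          rw [List.mem_toFinset, List.mem_map]
          exact ⟨G, List.mem_flatten.2 ⟨g H, List.mem_map.2 ⟨H, hH, rfl⟩, hG⟩, rfl⟩
    · ext a
      constructor
      · intro ha
        rw [mem_unionL] at ha
        obtain ⟨H, hH, haH⟩ := ha
        rw [(gspec H hH).2.2.2.2, mem_unionL] at haH
        obtain ⟨G, hG, haG⟩ := haH
        exact mem_unionL.2 ⟨G, List.mem_flatten.2 ⟨g H, List.mem_map.2 ⟨H, hH, rfl⟩, hG⟩, haG⟩
      · intro ha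
        rw [mem_unionL] at ha
        obtain ⟨G, hG, haG⟩ := ha
        rw [List.mem_flatten] at hG
        obtain ⟨l, hl, hGl⟩ := hG
        rw [List.mem_map] at hl
        obtain ⟨H, hH, rfl⟩ := hl
        exact mem_unionL.2 ⟨H, hH, hsub H hH G hGl haG⟩
  · rintro ⟨L, hR, hne, hord, hM, rfl⟩
    obtain ⟨Lb, hbQ, hbne, hbord, hbmin, hMeq⟩ := hM
    classical
    set fB := fun B : Finset ℕ => L.filter (fun G => finMin G ∈ B) with hfB
    have hmemfB : ∀ B G, G ∈ fB B ↔ G ∈ L ∧ finMin G ∈ B := by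
      intro B G; simp [hfB, List.mem_filter]
    have hminset : ∀ B ∈ Lb, ((fB B).map finMin).toFinset = B := by
      intro B hB
      ext x
      simp only [List.mem_toFinset, List.mem_map]
      constructor
      · rintro ⟨G, hG, rfl⟩
        exact ((hmemfB B G).1 hG).2
      · intro hx
        have : x ∈ unionL Lb := mem_unionL.2 ⟨B, hB, hx⟩
        rw [← hMeq] at this
        simp only [List.mem_toFinset, List.mem_map] at this
        obtain ⟨G, hG, rfl⟩ := this
        exact ⟨G, (hmemfB B G).2 ⟨hG, hx⟩, rfl⟩
    have hfBne : ∀ B ∈ Lb, fB B ≠ [] := by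
      intro B hB hnil
      obtain ⟨b, hb⟩ := hbne B hB
      rw [← hminset B hB, hnil] at hb
      simp at hb
    refine ⟨Lb.map (fun B => unionL (fB B)), ?_, ?_, ?_, ?_, ?_⟩
    · intro A hA
      simp only [List.mem_map] at hA
      obtain ⟨B, hB, rfl⟩ := hA
      refine ⟨fB B, ?_, ?_, ?_, ?_, rfl⟩
      · intro G hG; exact hR G ((hmemfB B G).1 hG).1
      · intro G hG; exact hne G ((hmemfB B G).1 hG).1
      · exact hord.filter _
      · rw [hminset B hB]; exact hbQ B hB
    · intro A hA
      simp only [List.mem_map] at hA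
      obtain ⟨B, hB, rfl⟩ := hA
      obtain ⟨G, hG⟩ := List.exists_mem_of_ne_nil _ (hfBne B hB)
      obtain ⟨a, ha⟩ := hne G ((hmemfB B G).1 hG).1
      exact ⟨a, mem_unionL.2 ⟨G, hG, ha⟩⟩
    · rw [List.pairwise_map]
      refine hbord.imp_of_mem ?_
      intro B B' hB hB' hRb a ha b hb
      rw [mem_unionL] at ha hb
      obtain ⟨G, hG, haG⟩ := ha
      obtain ⟨G', hG', hbG⟩ := hb
      have hGL := (hmemfB B G).1 hG
      have hG'L := (hmemfB B' G').1 hG'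
      have hlt : finMin G < finMin G' := hRb _ hGL.2 _ hG'L.2
      exact pairwise_sym hord hGL.1 hG'L.1 hlt (hne G hGL.1) (hne G' hG'L.1) a haG b hbG
    · have : (Lb.map (fun B => unionL (fB B))).map finMin = Lb.map finMin := by
        rw [List.map_map]
        apply List.map_congr_left
        intro B hB
        show finMin (unionL (fB B)) = finMin B
        rw [finMin_unionL (fun G hG => hne G ((hmemfB B G).1 hG).1) (hfBne B hB), hminset B hB]
      rw [this]; exact hbmin
    · ext a
      constructor
      · intro ha
        rw [mem_unionL] at ha
        obtain ⟨G, hG, haG⟩ := ha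
        have : finMin G ∈ unionL Lb := by
          rw [← hMeq, List.mem_toFinset, List.mem_map]
          exact ⟨G, hG, rfl⟩
        rw [mem_unionL] at this
        obtain ⟨B, hB, hmB⟩ := this
        exact mem_unionL.2 ⟨unionL (fB B), List.mem_map.2 ⟨B, hB, rfl⟩,
          mem_unionL.2 ⟨G, (hmemfB B G).2 ⟨hG, hmB⟩, haG⟩⟩
      · intro ha
        rw [mem_unionL] at ha
        obtain ⟨A, hA, haA⟩ := ha
        rw [List.mem_map] at hA
        obtain ⟨B, hB, rfl⟩ := hA
        rw [mem_unionL] at haA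
        obtain ⟨G, hG, haG⟩ := haA
        exact mem_unionL.2 ⟨G, ((hmemfB B G).1 hG).1, haG⟩

lemma conv_assoc (P Q R : Set (Finset ℕ)) : conv P (conv Q R) = conv (conv P Q) R := by
  rw [conv_eq_convL Q R, conv_eq_convL P (convL Q R), conv_eq_convL P Q,
    conv_eq_convL (convL P Q) R, convL_assoc]

end SchreierAux

lemma schreier_succ (n : ℕ) (hn : 1 ≤ n) :
    Schreier (n + 1) = conv SchreierOne (Schreier n) := by
  match n, hn with
  | (m+1), _ => rfl

lemma schreier_one : Schreier 1 = SchreierOne := rfl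

lemma schreier_conv (k l : ℕ) (hk : 1 ≤ k) (hl : 1 ≤ l) :
    Schreier (l + k) = conv (Schreier l) (Schreier k) := by
  induction l, hl using Nat.le_induction with
  | base => rw [Nat.add_comm, schreier_succ k hk, schreier_one]
  | succ l hl ih =>
    have h1 : l + 1 + k = (l + k) + 1 := by omega
    rw [h1, schreier_succ (l + k) (by omega), ih, SchreierAux.conv_assoc,
      ← schreier_succ l hl]


/-- For all `k, l ≥ 1`, the Schreier families satisfy
`S_{l+k} = S_l[S_k] = S_k[S_l]`. -/
theorem schreier_convolution (k l : ℕ) (hk : 1 ≤ k) (hl : 1 ≤ l) :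
    Schreier (l + k) = conv (Schreier l) (Schreier k) ∧
    Schreier (l + k) = conv (Schreier k) (Schreier l) := by
  exact ⟨schreier_conv k l hk hl, by rw [Nat.add_comm]; exact schreier_conv l k hl hk⟩
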